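/- For any disconnection kind d ∈ {E, C, I}: the terms d^U_{ab};d^U_{cd} and d^U_{ad};d^U_{cb} are well-typed of a given type A → B simultaneously (one is well-typed iff the other is), and the identity d^U_{ab};d^U_{cd} ≡ d^U_{ad};d^U_{cb} is derivable in the disconnection category Disc. -/

import Mathlib

set_option autoImplicit false

namespace Disconnection

/-! ### Chemical graphs

The countably infinite set `VS` of vertex names is taken to be `ℕ`.
Atom labels are chemical element symbols (countably many, indexed by `ℕ`)
or the special symbol `α`.  Bond multiplicities are natural numbers or the
formal ionic-bond value `ib`.  Labelling functions of a chemical graph take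
prescribed default values outside the (finite) vertex set, so that equality
of chemical graphs is extensional equality of the data on the vertex set. -/

inductive Atom where
  | elem : ℕ → Atom
  | alpha : Atom
  deriving DecidableEq

inductive Mult where
  | nat : ℕ → Mult
  | ib : Mult
  deriving DecidableEq

structure ChemGraph where
  V : Finset ℕ
  atom : ℕ → Atom
  charge : ℕ → ℤ
  mult : ℕ → ℕ → Mult
  mult_symm : ∀ u v, mult u v = mult v u
  atom_default : ∀ v, v ∉ V → atom v = Atom.alpha
  charge_default : ∀ v, v ∉ V → charge v = 0
  mult_default : ∀ u v, u ∉ V ∨ v ∉ V ∨ u = v → mult u v = Mult.nat 0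
  /-- Every α-labelled vertex has charge 0 or −1; an α-vertex of charge 0 has
  exactly one neighbour, a chemical-element vertex, joined to it with
  multiplicity 1, while an α-vertex of charge −1 is isolated. -/
  alpha_cond : ∀ a ∈ V, atom a = Atom.alpha →
      (charge a = 0 ∧ ∃ u ∈ V, (∃ n, atom u = Atom.elem n) ∧ mult a u = Mult.nat 1 ∧
        ∀ w ∈ V, w ≠ u → mult a w = Mult.nat 0) ∨
      (charge a = -1 ∧ ∀ w ∈ V, mult a w = Mult.nat 0)

namespace ChemGraph

/-- `u` is a chemical-element vertex of `A`. -/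
def Chem (A : ChemGraph) (u : ℕ) : Prop := u ∈ A.V ∧ ∃ n, A.atom u = Atom.elem n

/-- `u` is an α-labelled vertex of `A`. -/
def IsAlpha (A : ChemGraph) (u : ℕ) : Prop := u ∈ A.V ∧ A.atom u = Atom.alpha

/-- `u` is a vertex of `A` of positive charge. -/
def CrgPos (A : ChemGraph) (u : ℕ) : Prop := u ∈ A.V ∧ 0 < A.charge u

/-- `u` is a vertex of `A` of negative charge. -/
def CrgNeg (A : ChemGraph) (u : ℕ) : Prop := u ∈ A.V ∧ A.charge u < 0

/-- The (unique) neighbour of an α-vertex `a`, joined to it with multiplicity 1. -/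
noncomputable def Nbr (A : ChemGraph) (a : ℕ) : ℕ := by
  classical
  exact if h : ∃ u, u ∈ A.V ∧ A.mult a u = Mult.nat 1 then h.choose else 0

end ChemGraph

/-! ### The four disconnection rules, as (functional) relations

`ENegRel u a b A B` says that `A` is in the domain of the electron detachment
rule `E^u_{ab}` and that `B = E^u_{ab}(A)`, and similarly for the other rules. -/

/-- Electron detachment `E^u_{ab}` (negatively charged case). -/
def ENegRel (u a b : ℕ) (A B : ChemGraph) : Prop :=
  u ≠ a ∧ u ≠ b ∧ a ≠ b ∧
  A.Chem u ∧ A.CrgNeg u ∧ a ∉ A.V ∧ b ∉ A.V ∧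
  B.V = insert a (insert b A.V) ∧
  (∀ v, B.atom v = A.atom v) ∧
  B.charge u = A.charge u + 1 ∧ B.charge a = 0 ∧ B.charge b = -1 ∧
  (∀ v, v ≠ u → v ≠ a → v ≠ b → B.charge v = A.charge v) ∧
  B.mult u a = Mult.nat 1 ∧
  (∀ x y, ¬((x = u ∧ y = a) ∨ (x = a ∧ y = u)) → B.mult x y = A.mult x y)

/-- Electron detachment `E^{uv}` (non-negatively charged case). -/
def EPosRel (u v : ℕ) (A B : ChemGraph) : Prop :=
  u ≠ v ∧
  A.Chem u ∧ 0 ≤ A.charge u ∧ A.IsAlpha v ∧ A.mult u v = Mult.nat 1 ∧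
  B.V = A.V ∧ (∀ w, B.atom w = A.atom w) ∧
  B.charge u = A.charge u + 1 ∧ B.charge v = -1 ∧
  (∀ w, w ≠ u → w ≠ v → B.charge w = A.charge w) ∧
  B.mult u v = Mult.nat 0 ∧
  (∀ x y, ¬((x = u ∧ y = v) ∨ (x = v ∧ y = u)) → B.mult x y = A.mult x y)

/-- Ionic bond breaking `I^{uv}`. -/
def IRel (u v : ℕ) (A B : ChemGraph) : Prop :=
  u ≠ v ∧
  A.mult u v = Mult.ib ∧ A.CrgPos u ∧ A.CrgNeg v ∧
  B.V = A.V ∧ (∀ w, B.atom w = A.atom w) ∧ (∀ w, B.charge w = A.charge w) ∧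
  B.mult u v = Mult.nat 0 ∧
  (∀ x y, ¬((x = u ∧ y = v) ∨ (x = v ∧ y = u)) → B.mult x y = A.mult x y)

/-- Covalent bond breaking `C^{uv}_{ab}`. -/
def CRel (u v a b : ℕ) (A B : ChemGraph) : Prop :=
  u ≠ v ∧ u ≠ a ∧ u ≠ b ∧ v ≠ a ∧ v ≠ b ∧ a ≠ b ∧
  A.Chem u ∧ A.Chem v ∧ A.mult u v ≠ Mult.nat 0 ∧ A.mult u v ≠ Mult.ib ∧
  a ∉ A.V ∧ b ∉ A.V ∧
  B.V = insert a (insert b A.V) ∧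
  (∀ w, B.atom w = A.atom w) ∧
  B.charge a = 0 ∧ B.charge b = 0 ∧
  (∀ w, w ≠ a → w ≠ b → B.charge w = A.charge w) ∧
  (∃ n, A.mult u v = Mult.nat (n + 1) ∧ B.mult u v = Mult.nat n) ∧
  B.mult u a = Mult.nat 1 ∧ B.mult v b = Mult.nat 1 ∧
  (∀ x y, ¬((x = u ∧ y = v) ∨ (x = v ∧ y = u)) →
    ¬((x = u ∧ y = a) ∨ (x = a ∧ y = u)) →
    ¬((x = v ∧ y = b) ∨ (x = b ∧ y = v)) → B.mult x y = A.mult x y)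

/-- The renamed graph `B = A(u ↦ v)`. -/
def RenameRel (u v : ℕ) (A B : ChemGraph) : Prop :=
  B.V = insert v (A.V.erase u) ∧
  B.atom v = A.atom u ∧ B.charge v = A.charge u ∧
  (∀ w, w ≠ u → w ≠ v → B.atom w = A.atom w ∧ B.charge w = A.charge w) ∧
  (∀ x, x ≠ u → x ≠ v → B.mult v x = A.mult u x) ∧
  (∀ x y, x ≠ u → x ≠ v → y ≠ u → y ≠ v → B.mult x y = A.mult x y)

/-! ### Untyped terms -/

/-- The generating symbols of the free monoid of untyped terms. -/
inductive Gen where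
  | id : Gen
  | S : ℕ → Gen
  | R : ℕ → ℕ → Gen
  | Epos : ℕ → ℕ → Gen            -- E^{uv}
  | Eneg : ℕ → ℕ → ℕ → Gen        -- E^u_{ab}
  | I : ℕ → ℕ → Gen               -- I^{uv}
  | C : ℕ → ℕ → ℕ → ℕ → Gen       -- C^{uv}_{ab}
  | barEpos : ℕ → ℕ → Gen
  | barEneg : ℕ → ℕ → ℕ → Gen
  | barI : ℕ → ℕ → Gen
  | barC : ℕ → ℕ → ℕ → ℕ → Gen
  deriving DecidableEq

/-- Untyped terms: words in the free monoid on the generating symbols;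
the monoid multiplication `;` is list concatenation. -/
abbrev UTerm := List Gen

/-- The dagger on generators. -/
def Gen.dag : Gen → Gen
  | .id => .id
  | .S u => .S u
  | .R u v => .R v u
  | .Epos u v => .barEpos u v
  | .Eneg u a b => .barEneg u a b
  | .I u v => .barI u v
  | .C u v a b => .barC u v a b
  | .barEpos u v => .Epos u v
  | .barEneg u a b => .Eneg u a b
  | .barI u v => .I u v
  | .barC u v a b => .C u v a b

/-- The dagger `t ↦ t̄` on untyped terms. -/
def UTerm.dag (t : UTerm) : UTerm := (t.map Gen.dag).reverse

/-! ### Typing -/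

/-- Typing of a single generator. -/
inductive Step : Gen → ChemGraph → ChemGraph → Prop
  | id (A : ChemGraph) : Step .id A A
  | S (A : ChemGraph) (u : ℕ) : u ∈ A.V → Step (.S u) A A
  | R (A B : ChemGraph) (u v : ℕ) :
      A.IsAlpha u → v ∉ A.V.erase u → RenameRel u v A B → Step (.R u v) A B
  | Epos (A B : ChemGraph) (u v : ℕ) : EPosRel u v A B → Step (.Epos u v) A B
  | Eneg (A B : ChemGraph) (u a b : ℕ) : ENegRel u a b A B → Step (.Eneg u a b) A B
  | I (A B : ChemGraph) (u v : ℕ) : IRel u v A B → Step (.I u v) A B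
  | C (A B : ChemGraph) (u v a b : ℕ) : CRel u v a b A B → Step (.C u v a b) A B
  | barEpos (A B : ChemGraph) (u v : ℕ) : EPosRel u v B A → Step (.barEpos u v) A B
  | barEneg (A B : ChemGraph) (u a b : ℕ) : ENegRel u a b B A → Step (.barEneg u a b) A B
  | barI (A B : ChemGraph) (u v : ℕ) : IRel u v B A → Step (.barI u v) A B
  | barC (A B : ChemGraph) (u v a b : ℕ) : CRel u v a b B A → Step (.barC u v a b) A B

/-- Typing of a (possibly empty) word of generators. -/
inductive WTc : UTerm → ChemGraph → ChemGraph → Prop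
  | nil (A : ChemGraph) : WTc [] A A
  | cons {g : Gen} {A B C : ChemGraph} {t : UTerm} :
      Step g A B → WTc t B C → WTc (g :: t) A C

/-- `WT t A B`: the expression `t : A → B` is well-typed, i.e. `t` is a term
of type `A → B`. -/
def WT (t : UTerm) (A B : ChemGraph) : Prop := t ≠ [] ∧ WTc t A B

/-! ### Generic disconnection shapes -/

/-- All disconnections `d^U_D`, `d` ranging over the rule kinds `{E, C, I}`. -/
inductive DAll where
  | Eneg : ℕ → ℕ → ℕ → DAll
  | Epos : ℕ → ℕ → DAll
  | I : ℕ → ℕ → DAll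
  | C : ℕ → ℕ → ℕ → ℕ → DAll

namespace DAll

/-- The disconnection generator `d^U_D`. -/
def gen : DAll → Gen
  | .Eneg u a b => .Eneg u a b
  | .Epos u v => .Epos u v
  | .I u v => .I u v
  | .C u v a b => .C u v a b

/-- The connection generator `d̄^U_D`. -/
def bar (d : DAll) : Gen := d.gen.dag

/-- The superscript list `U`. -/
def U : DAll → List ℕ
  | .Eneg u _ _ => [u]
  | .Epos u v => [u, v]
  | .I u v => [u, v]
  | .C u v _ _ => [u, v]

/-- The subscript list `D`. -/
def D : DAll → List ℕ
  | .Eneg _ a b => [a, b]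
  | .C _ _ a b => [a, b]
  | _ => []

/-- `d^U_{D[v/u]}`: replace the occurrences of `u` in the subscript list by `v`. -/
def substD : DAll → ℕ → ℕ → DAll
  | .Eneg w a b, u, v => .Eneg w (if a = u then v else a) (if b = u then v else b)
  | .C w z a b, u, v => .C w z (if a = u then v else a) (if b = u then v else b)
  | d, _, _ => d

/-- Two disconnections are instances of the same rule. -/
def SameKind : DAll → DAll → Prop
  | .Eneg _ _ _, .Eneg _ _ _ => True
  | .Epos _ _, .Epos _ _ => True
  | .I _ _, .I _ _ => True
  | .C _ _ _ _, .C _ _ _ _ => True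
  | _, _ => False

end DAll

/-- Disconnection kinds `d^U_{ab}` with a two-element subscript list
(`d ∈ {E, C, I}` restricted to the instances that have subscripts). -/
inductive DK2 where
  | Eneg : ℕ → DK2
  | C : ℕ → ℕ → DK2

namespace DK2

def gen : DK2 → ℕ → ℕ → Gen
  | .Eneg u, a, b => .Eneg u a b
  | .C u v, a, b => .C u v a b

def bar (d : DK2) (a b : ℕ) : Gen := (d.gen a b).dag

def U : DK2 → List ℕ
  | .Eneg u => [u]
  | .C u v => [u, v]

end DK2

/-- Disconnection kinds `d^{uv}` with two superscripts and no subscripts. -/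
inductive DK0 where
  | Epos : DK0
  | I : DK0

namespace DK0

def gen : DK0 → ℕ → ℕ → Gen
  | .Epos, u, v => .Epos u v
  | .I, u, v => .I u v

def bar (d : DK0) (u v : ℕ) : Gen := (d.gen u v).dag

end DK0

/-- Disconnection or connection kinds with a two-element subscript list:
`d ∈ {C, E, C̄, Ē}`. -/
inductive DK2b where
  | fwd : DK2 → DK2b
  | bwd : DK2 → DK2b

def DK2b.gen : DK2b → ℕ → ℕ → Gen
  | .fwd k, a, b => k.gen a b
  | .bwd k, a, b => k.bar a b

/-- `S^U` : the sequence of `S`-terms on a list of vertex names. -/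
def Sseq (U : List ℕ) : UTerm := U.map Gen.S

/-! ### The equivalence relation ≈ on untyped terms -/

/-- The smallest equivalence relation on untyped terms compatible with the
monoid multiplication and containing the defining equations of the
disconnection category. -/
inductive Approx : UTerm → UTerm → Prop
  | refl (t : UTerm) : Approx t t
  | symm {t s : UTerm} : Approx t s → Approx s t
  | trans {t s r : UTerm} : Approx t s → Approx s r → Approx t r
  | congr {t s t' s' : UTerm} : Approx t s → Approx t' s' → Approx (t ++ t') (s ++ s')
  -- renaming equations
  | r_trans (u z w : ℕ) : Approx [.R u z, .R z w] [.R u w]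
  | r_comm (u z v w : ℕ) : Approx [.R u z, .R v w] [.R v w, .R u z]
  | r_refl (u : ℕ) : Approx [.R u u] [.S u]
  | r_symm (a b z : ℕ) : Approx [.R b z, .R a b] [.S b, .R a z]
  | s_r_comm (u v w : ℕ) : Approx [.R u v, .S w] [.S w, .R u v]
  | s_r_absorb₁ (u v : ℕ) : Approx [.R u v, .S v] [.S u, .R u v]
  | s_r_absorb₂ (u v : ℕ) : Approx [.R u v, .S v] [.R u v]
  -- renamings against (dis)connections
  | r_d (u v : ℕ) (d : DAll) : Approx [.R u v, d.gen] [d.gen, .R u v]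
  | r_epos (u v w : ℕ) : Approx [.R u v, .Epos w v] [.Epos w u, .R u v]
  | d_r (d : DAll) (u v : ℕ) : u ∈ d.D → Approx [d.gen, .R u v] [(d.substD u v).gen]
  | r_d4 (d : DK2) (i j : ℕ) (h : DK2) (a b c e : ℕ) :
      Approx [d.gen i j, h.bar a b, .R i c, .R j e] [h.bar a b, d.gen c e]
  -- disconnection/connection interactions
  | d_dbar₁ (d : DK2) (a b c e : ℕ) :
      Approx [d.gen a b, d.bar c e] (Sseq d.U ++ [.R c a, .R e b])
  | d_dbar₂ (d : DK2) (a b c : ℕ) :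
      Approx [d.gen a b, d.bar c b] (Sseq d.U ++ [.R c a])
  | d_dbar₃ (d : DK2) (a b e : ℕ) :
      Approx [d.gen a b, d.bar a e] (Sseq d.U ++ [.R e b])
  | d_dbar₄ (d : DAll) : Approx [d.gen, d.bar] (Sseq d.U)
  | dbar_d (d : DAll) : Approx [d.bar, d.gen] (Sseq d.U ++ Sseq d.D)
  | e_ebar (u a b z : ℕ) :
      Approx [.Epos u a, .barEpos u b] [.S u, .R a z, .R b a, .R z b]
  | dbar_d_comm (d : DK0) (u v w z : ℕ) :
      Approx [d.bar u v, d.gen w z] [d.gen w z, d.bar u v]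
  -- S equations
  | s_comm (u v : ℕ) : Approx [.S u, .S v] [.S v, .S u]
  | s_idem (u : ℕ) : Approx [.S u, .S u] [.S u]
  | s_d (u : ℕ) (d : DAll) : Approx [.S u, d.gen] [d.gen, .S u]
  | d_s (d : DAll) (v : ℕ) : v ∈ d.U → Approx [d.gen, .S v] [d.gen]
  | c_swap (u v a b : ℕ) : Approx [.C u v a b] [.C v u b a]
  -- commutation of disconnections
  | d_d_comm (d d' : DAll) : d.SameKind d' → Approx [d.gen, d'.gen] [d'.gen, d.gen]
  | c_i (u v a b w z : ℕ) : Approx [.C u v a b, .I w z] [.I w z, .C u v a b]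
  | eneg_i (u a b w z : ℕ) : Approx [.Eneg u a b, .I w z] [.I w z, .Eneg u a b]
  | epos_i (u v w z : ℕ) : Approx [.Epos u v, .I w z] [.I w z, .Epos u v]
  | bepos_i (u v w z : ℕ) : Approx [.barEpos u v, .I w z] [.I w z, .barEpos u v]
  | beneg_i (u a b w z : ℕ) : Approx [.barEneg u a b, .I w z] [.I w z, .barEneg u a b]
  | bc_i (u v a b w z : ℕ) : Approx [.barC u v a b, .I w z] [.I w z, .barC u v a b]
  | eneg_c (u a b w z c e : ℕ) : Approx [.Eneg u a b, .C w z c e] [.C w z c e, .Eneg u a b]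
  | epos_c (u v w z c e : ℕ) : Approx [.Epos u v, .C w z c e] [.C w z c e, .Epos u v]
  | bepos_c (u v w z c e : ℕ) : Approx [.barEpos u v, .C w z c e] [.C w z c e, .barEpos u v]
  | epos_eneg (u v w c e : ℕ) : Approx [.Epos u v, .Eneg w c e] [.Eneg w c e, .Epos u v]
  | bepos_eneg (u v w c e : ℕ) : Approx [.barEpos u v, .Eneg w c e] [.Eneg w c e, .barEpos u v]

/-- The identification `≡` of typed terms: `t ≡ s` iff `t ≈ s` or `t̄ ≈ s̄`. -/
def TermEq (t s : UTerm) : Prop := Approx t s ∨ Approx t.dag s.dag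

/-- Equality of morphisms of the disconnection category `Disc`: the smallest
congruence (with respect to composition) on terms of a fixed type `A → B`
containing `≡` and the unitality equations of a category (associativity is
automatic in the word encoding). -/
inductive DiscEq : ChemGraph → ChemGraph → UTerm → UTerm → Prop
  | base {A B : ChemGraph} {t s : UTerm} :
      WT t A B → WT s A B → TermEq t s → DiscEq A B t s
  | refl {A B : ChemGraph} {t : UTerm} : WT t A B → DiscEq A B t t
  | symm {A B : ChemGraph} {t s : UTerm} : DiscEq A B t s → DiscEq A B s t
  | trans {A B : ChemGraph} {t s r : UTerm} :
      DiscEq A B t s → DiscEq A B s r → DiscEq A B t r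
  | comp {A B C : ChemGraph} {t t' s s' : UTerm} :
      DiscEq A B t t' → DiscEq B C s s' → DiscEq A C (t ++ s) (t' ++ s')
  | id_left {A B : ChemGraph} {t : UTerm} : WT t A B → DiscEq A B (Gen.id :: t) t
  | id_right {A B : ChemGraph} {t : UTerm} : WT t A B → DiscEq A B (t ++ [Gen.id]) t

/-! ### Classification of generators -/

def Gen.isI : Gen → Prop
  | .I _ _ => True
  | _ => False

def Gen.isC : Gen → Prop
  | .C _ _ _ _ => True
  | _ => False

def Gen.isEneg : Gen → Prop
  | .Eneg _ _ _ => True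
  | _ => False

def Gen.isEpos : Gen → Prop
  | .Epos _ _ => True
  | _ => False

def Gen.isBarI : Gen → Prop
  | .barI _ _ => True
  | _ => False

def Gen.isBarC : Gen → Prop
  | .barC _ _ _ _ => True
  | _ => False

def Gen.isBarEneg : Gen → Prop
  | .barEneg _ _ _ => True
  | _ => False

def Gen.isBarEpos : Gen → Prop
  | .barEpos _ _ => True
  | _ => False

def Gen.isR : Gen → Prop
  | .R _ _ => True
  | _ => False

def Gen.isS : Gen → Prop
  | .S _ => True
  | _ => False

def Gen.isDisc (g : Gen) : Prop := g.isI ∨ g.isC ∨ g.isEneg ∨ g.isEpos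

def Gen.isConn (g : Gen) : Prop := g.isBarI ∨ g.isBarC ∨ g.isBarEneg ∨ g.isBarEpos

/-- Superscript vertex names of a (dis)connection generator. -/
def Gen.sups : Gen → List ℕ
  | .Eneg u _ _ => [u]
  | .Epos u v => [u, v]
  | .I u v => [u, v]
  | .C u v _ _ => [u, v]
  | .barEneg u _ _ => [u]
  | .barEpos u v => [u, v]
  | .barI u v => [u, v]
  | .barC u v _ _ => [u, v]
  | _ => []

/-- Subscript vertex names of a (dis)connection generator. -/
def Gen.subs : Gen → List ℕ
  | .Eneg _ a b => [a, b]
  | .C _ _ a b => [a, b]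
  | .barEneg _ a b => [a, b]
  | .barC _ _ a b => [a, b]
  | _ => []

/-- All vertex names occurring in a generator. -/
def Gen.names : Gen → List ℕ
  | .id => []
  | .S u => [u]
  | .R u v => [u, v]
  | .Epos u v => [u, v]
  | .Eneg u a b => [u, a, b]
  | .I u v => [u, v]
  | .C u v a b => [u, v, a, b]
  | .barEpos u v => [u, v]
  | .barEneg u a b => [u, a, b]
  | .barI u v => [u, v]
  | .barC u v a b => [u, v, a, b]

/-- Substitute `z` for `a` in the subscript positions of a generator. -/
def Gen.substSub (g : Gen) (a z : ℕ) : Gen :=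
  match g with
  | .Eneg u x y => .Eneg u (if x = a then z else x) (if y = a then z else y)
  | .C u v x y => .C u v (if x = a then z else x) (if y = a then z else y)
  | .barEneg u x y => .barEneg u (if x = a then z else x) (if y = a then z else y)
  | .barC u v x y => .barC u v (if x = a then z else x) (if y = a then z else y)
  | g => g

/-- Rename a vertex name `a` to `z` everywhere in a generator. -/
def Gen.renameAll (g : Gen) (a z : ℕ) : Gen :=
  let f : ℕ → ℕ := fun n => if n = a then z else n
  match g with
  | .id => .id
  | .S u => .S (f u)
  | .R u v => .R (f u) (f v)
  | .Epos u v => .Epos (f u) (f v)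
  | .Eneg u x y => .Eneg (f u) (f x) (f y)
  | .I u v => .I (f u) (f v)
  | .C u v x y => .C (f u) (f v) (f x) (f y)
  | .barEpos u v => .barEpos (f u) (f v)
  | .barEneg u x y => .barEneg (f u) (f x) (f y)
  | .barI u v => .barI (f u) (f v)
  | .barC u v x y => .barC (f u) (f v) (f x) (f y)

/-- The name `x` occurs in the term `t`. -/
def occurs (x : ℕ) (t : UTerm) : Prop := ∃ g ∈ t, x ∈ g.names

/-- `D^add_t`: names appearing as subscripts of disconnections. -/
def Dadd (t : UTerm) : Set ℕ := {a | ∃ g ∈ t, g.isDisc ∧ a ∈ g.subs}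

/-- `D^remove_t`: names appearing as subscripts of connections. -/
def Drem (t : UTerm) : Set ℕ := {a | ∃ g ∈ t, g.isConn ∧ a ∈ g.subs}

/-- `U_t`: names appearing as superscripts of (dis)connections. -/
def Usup (t : UTerm) : Set ℕ := {v | ∃ g ∈ t, (g.isDisc ∨ g.isConn) ∧ v ∈ g.sups}

/-- `S_t`: names appearing in `S`-terms. -/
def Sset (t : UTerm) : Set ℕ := {u | Gen.S u ∈ t}

/-! ### ICE-form, renaming form, normal form -/

/-- The blocks of an ICE-form. -/
structure ICEBlocks where
  lI : UTerm
  lC : UTerm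
  lEn : UTerm
  lEp : UTerm
  lbEp : UTerm
  lbEn : UTerm
  lbC : UTerm
  lbI : UTerm
  lR : UTerm
  lS : UTerm

def ICEBlocks.term (n : ICEBlocks) : UTerm :=
  n.lI ++ n.lC ++ n.lEn ++ n.lEp ++ n.lbEp ++ n.lbEn ++ n.lbC ++ n.lbI ++ n.lR ++ n.lS

def ICEBlocks.Wf (n : ICEBlocks) : Prop :=
  (∀ g ∈ n.lI, g.isI) ∧ (∀ g ∈ n.lC, g.isC) ∧ (∀ g ∈ n.lEn, g.isEneg) ∧
  (∀ g ∈ n.lEp, g.isEpos) ∧ (∀ g ∈ n.lbEp, g.isBarEpos) ∧ (∀ g ∈ n.lbEn, g.isBarEneg) ∧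
  (∀ g ∈ n.lbC, g.isBarC) ∧ (∀ g ∈ n.lbI, g.isBarI) ∧ (∀ g ∈ n.lR, g.isR) ∧
  (∀ g ∈ n.lS, g.isS)

/-- A term is in ICE-form if it is an identity term or a well-formed
concatenation `I;C;E^{<0};E^{≥0};Ē^{≥0};Ē^{<0};C̄;Ī;R;S` of blocks. -/
def ICEForm (t : UTerm) : Prop :=
  t = [Gen.id] ∨ ∃ n : ICEBlocks, n.Wf ∧ t = n.term

/-- The data of a renaming form: the blocks `𝙰` and `𝙱` of renaming terms,
given as lists of (source, target) pairs. -/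
structure RenData where
  ab : List (ℕ × ℕ)
  cd : List (ℕ × ℕ)

namespace RenData

def termA (r : RenData) : UTerm := r.ab.map fun p => Gen.R p.1 p.2
def termB (r : RenData) : UTerm := r.cd.map fun p => Gen.R p.1 p.2
def term (r : RenData) : UTerm := r.termA ++ r.termB

def A (r : RenData) : List ℕ := r.ab.map Prod.fst
def B (r : RenData) : List ℕ := r.ab.map Prod.snd
def C (r : RenData) : List ℕ := r.cd.map Prod.fst
def D (r : RenData) : List ℕ := r.cd.map Prod.snd

/-- The conditions of Definition (Renaming form), with source graph `H`. -/
def IsRenamingForm (r : RenData) (H : ChemGraph) : Prop :=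
  r.A.Nodup ∧ r.B.Nodup ∧ r.C.Nodup ∧ r.D.Nodup ∧
  (∀ a ∈ r.A, a ∉ r.B) ∧
  (∀ c ∈ r.C, c ∈ r.B) ∧
  (∀ d ∈ r.D, d ∈ r.A) ∧
  (∀ p ∈ r.ab, ∀ q ∈ r.cd, q.1 = p.2 → H.Nbr p.1 ≠ H.Nbr q.2)

end RenData

/-- The data of a term in ICER-form: the ICE blocks, with the renaming block
split into its renaming-form parts `𝙰` and `𝙱`, and the `S`-block given by a
list of names. -/
structure NF where
  lI : UTerm
  lC : UTerm
  lEn : UTerm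
  lEp : UTerm
  lbEp : UTerm
  lbEn : UTerm
  lbC : UTerm
  lbI : UTerm
  ren : RenData
  sS : List ℕ

namespace NF

/-- The (dis)connection prefix of the term. -/
def core (n : NF) : UTerm :=
  n.lI ++ n.lC ++ n.lEn ++ n.lEp ++ n.lbEp ++ n.lbEn ++ n.lbC ++ n.lbI

def term (n : NF) : UTerm := n.core ++ n.ren.term ++ Sseq n.sS

def Wf (n : NF) : Prop :=
  (∀ g ∈ n.lI, g.isI) ∧ (∀ g ∈ n.lC, g.isC) ∧ (∀ g ∈ n.lEn, g.isEneg) ∧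
  (∀ g ∈ n.lEp, g.isEpos) ∧ (∀ g ∈ n.lbEp, g.isBarEpos) ∧ (∀ g ∈ n.lbEn, g.isBarEneg) ∧
  (∀ g ∈ n.lbC, g.isBarC) ∧ (∀ g ∈ n.lbI, g.isBarI)

/-- Condition (6) of the normal form: a disconnection `d^U_D` with `d ≠ I`
conflicts with any connection `d̄^U_F` or `d̄^{U^r}_F`. -/
def Conflict6 : Gen → Gen → Prop
  | .Eneg u _ _, .barEneg u' _ _ => u' = u
  | .Epos u v, .barEpos u' v' => (u' = u ∧ v' = v) ∨ (u' = v ∧ v' = u)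
  | .C u v _ _, .barC u' v' _ _ => (u' = u ∧ v' = v) ∨ (u' = v ∧ v' = u)
  | _, _ => False

/-- The conditions of Definition (Normal form) for a term of type `A → B`. -/
def IsNormal (n : NF) (A B : ChemGraph) : Prop :=
  n.Wf ∧ WT n.term A B ∧
  (∃ H, WTc n.core A H ∧ n.ren.IsRenamingForm H) ∧
  -- (1) every S-term occurs exactly once
  (∀ u, Gen.S u ∈ n.term → n.term.count (Gen.S u) = 1) ∧
  -- (2) (U_t ∪ A_t ∪ B_t) ∩ S_t = ∅
  (∀ u, (u ∈ Usup n.term ∨ u ∈ n.ren.A ∨ u ∈ n.ren.B) → u ∉ Sset n.term) ∧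
  -- (3) D^add ∖ D^remove ⊆ A_t ∖ D_t
  (∀ x, x ∈ Dadd n.term → x ∉ Drem n.term → x ∈ n.ren.A ∧ x ∉ n.ren.D) ∧
  -- (4) D^add ∩ B_t = ∅
  (∀ x, x ∈ Dadd n.term → x ∉ n.ren.B) ∧
  -- (5) connections cannot be renamed into applicable ones
  (∀ t₁ g t₂, n.term = t₁ ++ g :: t₂ → g.isConn → ∀ a ∈ g.subs, ∀ z,
    Gen.R z a ∈ n.term → ∀ A', WTc t₁ A A' → ¬ ∃ B', Step (g.substSub a z) A' B') ∧
  -- (6) no disconnection together with a matching connection (d ≠ I)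
  (∀ g h, g ∈ n.term → h ∈ n.term → Conflict6 g h → False) ∧
  -- (7) E^{uv} excludes Ē^{uw}
  (∀ u v w, Gen.Epos u v ∈ n.term → Gen.barEpos u w ∉ n.term) ∧
  -- (8) I^{uv} and Ī^{uv} together force an E-term on v
  (∀ u v, Gen.I u v ∈ n.term → Gen.barI u v ∈ n.term →
    ∃ g ∈ n.term, (∃ a b, g = Gen.Eneg v a b ∨ g = Gen.barEneg v a b) ∨
      (∃ a, g = Gen.Epos v a ∨ g = Gen.barEpos v a))

end NF

/-- A term is in normal form (of type `A → B`). -/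
def NormalForm (t : UTerm) (A B : ChemGraph) : Prop :=
  WT t A B ∧ (t = [Gen.id] ∨ ∃ n : NF, t = n.term ∧ n.IsNormal A B)

/-! ### The syntactic manipulations of terms in normal form -/

/-- Swap the first components of the `i`-th and `j`-th pairs of a list. -/
def swapFst (l : List (ℕ × ℕ)) (i j : Fin l.length) : List (ℕ × ℕ) :=
  (l.set i ((l.get j).1, (l.get i).2)).set j ((l.get i).1, (l.get j).2)

/-- The six generating syntactic manipulations of terms in normal form
(of type `A → B`). -/
inductive Manip (A B : ChemGraph) : UTerm → UTerm → Prop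
  /- (1) commuting the terms inside each of the named sequences -/
  | comm (n n' : NF) (hn : n.IsNormal A B)
      (h₁ : n.lI.Perm n'.lI) (h₂ : n.lC.Perm n'.lC) (h₃ : n.lEn.Perm n'.lEn)
      (h₄ : n.lEp.Perm n'.lEp) (h₅ : n.lbEp.Perm n'.lbEp) (h₆ : n.lbEn.Perm n'.lbEn)
      (h₇ : n.lbC.Perm n'.lbC) (h₈ : n.lbI.Perm n'.lbI)
      (h₉ : n.ren.ab.Perm n'.ren.ab) (h₁₀ : n.ren.cd.Perm n'.ren.cd)
      (h₁₁ : n.sS.Perm n'.sS) :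
      Manip A B n.term n'.term
  /- (2) permuting the vertex names in a C-term -/
  | cswap (t₁ t₂ : UTerm) (u v a b : ℕ) :
      Manip A B (t₁ ++ Gen.C u v a b :: t₂) (t₁ ++ Gen.C v u b a :: t₂)
  /- (3) exchanging subscripts between repeated (dis)connections -/
  | sswap (t₁ t₂ : UTerm) (k : DK2b) (a b c e : ℕ) :
      Manip A B (t₁ ++ k.gen a b :: k.gen c e :: t₂)
                (t₁ ++ k.gen a e :: k.gen c b :: t₂)
  /- (4) renaming a vertex that is introduced and removed -/
  | rename (n : NF) (hn : n.IsNormal A B) (a z : ℕ)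
      (ha : a ∈ Dadd n.term ∨ a ∈ n.ren.C)
      (hz₁ : ¬ occurs z n.term) (hz₂ : z ∉ A.V) :
      Manip A B n.term (n.term.map fun g => g.renameAll a z)
  /- (5) exchanging vertex names between renaming terms with equal neighbours -/
  | rswap (n : NF) (hn : n.IsNormal A B) (i j : Fin n.ren.ab.length) (hij : i ≠ j)
      (H : ChemGraph) (hH : WTc n.core A H)
      (hnbr : H.Nbr (n.ren.ab.get i).1 = H.Nbr (n.ren.ab.get j).1) :
      Manip A B n.term
        (NF.term { n with ren := { ab := swapFst n.ren.ab i j, cd := n.ren.cd } })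
  /- (6) exchanging vertex names between connections and renaming terms -/
  | rexch (t₁ t₂ t₃ : UTerm) (g : Gen) (a z b : ℕ)
      (hg : g.isBarEneg ∨ g.isBarC) (ha : a ∈ g.subs)
      (hdom : ∃ A', WTc t₁ A A' ∧ ∃ B', Step (g.substSub a z) A' B') :
      Manip A B (t₁ ++ g :: (t₂ ++ Gen.R z b :: t₃))
                (t₁ ++ g.substSub a z :: (t₂ ++ Gen.R a b :: t₃))

/-- The equivalence `~` on terms in normal form: a sequence of syntactic
manipulations. -/
def NFsim (A B : ChemGraph) : UTerm → UTerm → Prop :=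
  Relation.ReflTransGen (Manip A B)

/-! ### The translation into the category of reactions -/

/-- The translation of a single generator: a pair of finite sets of names. -/
def Gen.rt : Gen → Finset ℕ × Finset ℕ
  | .id => (∅, ∅)
  | .S u => ({u}, {u})
  | .R u v => ({u}, {v})
  | .Epos u v => ({u, v}, {u, v})
  | .Eneg u a b => ({u}, {u, a, b})
  | .I u v => ({u, v}, {u, v})
  | .C u v a b => ({u, v}, {u, v, a, b})
  | .barEpos u v => ({u, v}, {u, v})
  | .barEneg u a b => ({u, a, b}, {u})
  | .barI u v => ({u, v}, {u, v})
  | .barC u v a b => ({u, v, a, b}, {u, v})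

/-- Composition of translated morphisms. -/
def rcomp (p q : Finset ℕ × Finset ℕ) : Finset ℕ × Finset ℕ :=
  (p.1 ∪ (q.1 \ p.2), q.2 ∪ (p.2 \ q.1))

/-- The translation `R` from terms to morphisms of the category of reactions,
represented by pairs of finite sets of vertex names. -/
def RT (t : UTerm) : Finset ℕ × Finset ℕ :=
  t.foldr (fun g p => rcomp g.rt p) (∅, ∅)

def DK2.toAll : DK2 → ℕ → ℕ → DAll
  | .Eneg u, a, b => .Eneg u a b
  | .C u v, a, b => .C u v a b

lemma DK2.toAll_gen (d : DK2) (p q : ℕ) : (d.toAll p q).gen = d.gen p q := by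
  cases d <;> rfl

lemma DK2.toAll_bar (d : DK2) (p q : ℕ) : (d.toAll p q).bar = d.bar p q := by
  cases d <;> rfl

lemma DK2.toAll_U (d : DK2) (p q : ℕ) : (d.toAll p q).U = d.U := by
  cases d <;> rfl

lemma DK2.toAll_substD (d : DK2) {c x : ℕ} (h : c ≠ x) (e : ℕ) :
    (d.toAll c x).substD x e = d.toAll c e := by
  cases d <;> simp [DK2.toAll, DAll.substD, h]

lemma DK2.toAll_memD (d : DK2) (c x : ℕ) : x ∈ (d.toAll c x).D := by
  cases d <;> simp [DK2.toAll, DAll.D]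

lemma DK2.toAll_same (d : DK2) (a b c e : ℕ) : (d.toAll a b).SameKind (d.toAll c e) := by
  cases d <;> trivial

lemma Approx.ctx (pre post : UTerm) {a b : UTerm} (h : Approx a b) :
    Approx (pre ++ a ++ post) (pre ++ b ++ post) :=
  ((Approx.refl pre).congr h).congr (Approx.refl post)

lemma absorbU (d : DK2) (p q : ℕ) : Approx ([d.gen p q] ++ Sseq d.U) [d.gen p q] := by
  cases d with
  | Eneg u => exact Approx.d_s (DAll.Eneg u p q) u (by simp [DAll.U])
  | C u v =>
      have h1 : Approx [Gen.C u v p q, Gen.S u] [Gen.C u v p q] :=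
        Approx.d_s (DAll.C u v p q) u (by simp [DAll.U])
      have h2 : Approx [Gen.C u v p q, Gen.S v] [Gen.C u v p q] :=
        Approx.d_s (DAll.C u v p q) v (by simp [DAll.U])
      exact (h1.congr (Approx.refl [Gen.S v])).trans h2

lemma absorbUL (d : DK2) (p q : ℕ) : Approx (Sseq d.U ++ [d.gen p q]) [d.gen p q] := by
  cases d with
  | Eneg u =>
      have h1 : Approx [Gen.S u, Gen.Eneg u p q] [Gen.Eneg u p q, Gen.S u] :=
        Approx.s_d u (DAll.Eneg u p q)
      exact h1.trans (Approx.d_s (DAll.Eneg u p q) u (by simp [DAll.U]))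
  | C u v =>
      have h1 : Approx [Gen.S v, Gen.C u v p q] [Gen.C u v p q, Gen.S v] :=
        Approx.s_d v (DAll.C u v p q)
      have h2 : Approx [Gen.S u, Gen.C u v p q] [Gen.C u v p q, Gen.S u] :=
        Approx.s_d u (DAll.C u v p q)
      have step1 : Approx [Gen.S u, Gen.S v, Gen.C u v p q]
          [Gen.S u, Gen.C u v p q, Gen.S v] := Approx.ctx [Gen.S u] [] h1
      have step2 : Approx [Gen.S u, Gen.C u v p q, Gen.S v]
          [Gen.C u v p q, Gen.S u, Gen.S v] := Approx.ctx [] [Gen.S v] h2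
      exact (step1.trans step2).trans (absorbU (DK2.C u v) p q)

lemma half_chain (d : DK2) (a b c e x : ℕ) (hcx : c ≠ x) :
    Approx [d.gen a b, d.gen c e]
      [d.gen c x, d.gen c x, .R x e, .R x b, .R c a] := by
  -- abbreviations
  have hdd4 : Approx [d.gen c e, d.bar c e] (Sseq d.U) := by
    have h := Approx.d_dbar₄ (d.toAll c e)
    rwa [DK2.toAll_gen, DK2.toAll_bar, DK2.toAll_U] at h
  have e1 : Approx [d.gen c e] [d.gen c e, d.bar c e, d.gen c e] :=
    ((hdd4.congr (Approx.refl [d.gen c e])).trans (absorbUL d c e)).symm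
  have step1 : Approx [d.gen a b, d.gen c e]
      [d.gen a b, d.gen c e, d.bar c e, d.gen c e] :=
    (Approx.refl [d.gen a b]).congr e1
  have hcomm : Approx [d.gen a b, d.gen c e] [d.gen c e, d.gen a b] := by
    have h := Approx.d_d_comm (d.toAll a b) (d.toAll c e) (DK2.toAll_same d a b c e)
    rwa [DK2.toAll_gen, DK2.toAll_gen] at h
  have step2 : Approx [d.gen a b, d.gen c e, d.bar c e, d.gen c e]
      [d.gen c e, d.gen a b, d.bar c e, d.gen c e] :=
    Approx.ctx [] [d.bar c e, d.gen c e] hcomm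
  have step3 : Approx [d.gen c e, d.gen a b, d.bar c e, d.gen c e]
      ([d.gen c e] ++ (Sseq d.U ++ [.R c a, .R e b]) ++ [d.gen c e]) :=
    Approx.ctx [d.gen c e] [d.gen c e] (Approx.d_dbar₁ d a b c e)
  have step4 : Approx ([d.gen c e] ++ (Sseq d.U ++ [.R c a, .R e b]) ++ [d.gen c e])
      [d.gen c e, .R c a, .R e b, d.gen c e] := by
    have h := (absorbU d c e).congr (Approx.refl [Gen.R c a, Gen.R e b, d.gen c e])
    simpa only [List.append_assoc, List.cons_append, List.nil_append] using h
  have rd : ∀ u v p q : ℕ, Approx [Gen.R u v, d.gen p q] [d.gen p q, Gen.R u v] := by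
    intro u v p q
    have h := Approx.r_d u v (d.toAll p q)
    rwa [DK2.toAll_gen] at h
  have step5 : Approx [d.gen c e, .R c a, .R e b, d.gen c e]
      [d.gen c e, .R c a, d.gen c e, .R e b] :=
    Approx.ctx [d.gen c e, .R c a] [] (rd e b c e)
  have step6 : Approx [d.gen c e, .R c a, d.gen c e, .R e b]
      [d.gen c e, d.gen c e, .R c a, .R e b] :=
    Approx.ctx [d.gen c e] [.R e b] (rd c a c e)
  have hexp : Approx [d.gen c e] [d.gen c x, .R x e] := by
    have h := Approx.d_r (d.toAll c x) x e (DK2.toAll_memD d c x)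
    rw [DK2.toAll_gen, DK2.toAll_substD d hcx, DK2.toAll_gen] at h
    exact h.symm
  have step7 : Approx [d.gen c e, d.gen c e, .R c a, .R e b]
      [d.gen c x, .R x e, d.gen c e, .R c a, .R e b] :=
    Approx.ctx [] [d.gen c e, .R c a, .R e b] hexp
  have step8 : Approx [d.gen c x, .R x e, d.gen c e, .R c a, .R e b]
      [d.gen c x, d.gen c e, .R x e, .R c a, .R e b] :=
    Approx.ctx [d.gen c x] [.R c a, .R e b] (rd x e c e)
  have step9 : Approx [d.gen c x, d.gen c e, .R x e, .R c a, .R e b]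
      [d.gen c x, d.gen c x, .R x e, .R x e, .R c a, .R e b] :=
    Approx.ctx [d.gen c x] [.R x e, .R c a, .R e b] hexp
  have step10 : Approx [d.gen c x, d.gen c x, .R x e, .R x e, .R c a, .R e b]
      [d.gen c x, d.gen c x, .R x e, .R x e, .R e b, .R c a] :=
    Approx.ctx [d.gen c x, d.gen c x, .R x e, .R x e] [] (Approx.r_comm c a e b)
  have step11 : Approx [d.gen c x, d.gen c x, .R x e, .R x e, .R e b, .R c a]
      [d.gen c x, d.gen c x, .R x e, .R x b, .R c a] :=
    Approx.ctx [d.gen c x, d.gen c x, .R x e] [.R c a] (Approx.r_trans x e b)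
  exact (((((((((step1.trans step2).trans step3).trans step4).trans step5).trans
    step6).trans step7).trans step8).trans step9).trans step10).trans step11

lemma approx_swap (d : DK2) (a b c e : ℕ) :
    Approx [d.gen a b, d.gen c e] [d.gen a e, d.gen c b] := by
  have hcx : c ≠ c + 1 := by omega
  have mid : Approx [d.gen c (c+1), d.gen c (c+1), .R (c+1) e, .R (c+1) b, .R c a]
      [d.gen c (c+1), d.gen c (c+1), .R (c+1) b, .R (c+1) e, .R c a] :=
    Approx.ctx [d.gen c (c+1), d.gen c (c+1)] [.R c a] (Approx.r_comm (c+1) e (c+1) b)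
  exact ((half_chain d a b c e (c+1) hcx).trans mid).trans
    (half_chain d a e c b (c+1) hcx).symm

lemma wtc_two {g1 g2 : Gen} {A B : ChemGraph} (h : WTc [g1, g2] A B) :
    ∃ M, Step g1 A M ∧ Step g2 M B := by
  cases h with
  | cons s h' =>
    cases h' with
    | cons s2 h'' => cases h''; exact ⟨_, s, s2⟩

set_option maxHeartbeats 2000000 in
lemma eneg_swap {u a b c e : ℕ} {A M B : ChemGraph}
    (h1 : ENegRel u a b A M) (h2 : ENegRel u c e M B) :
    ∃ M', ENegRel u a e A M' ∧ ENegRel u c b M' B := by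
  obtain ⟨hua, hub, hab, hchem, hneg, haV, hbV, hMV, hMat, hMcu, hMca, hMcb, hMco, hMm, hMmo⟩ := h1
  obtain ⟨huc, hue, hce, hchem2, hneg2, hcV, heV, hBV, hBat, hBcu, hBcc, hBce, hBco, hBm, hBmo⟩ := h2
  have huV : u ∈ A.V := hchem.1
  have haM : a ∈ M.V := by rw [hMV]; simp
  have hbM : b ∈ M.V := by rw [hMV]; simp
  have huM : u ∈ M.V := by rw [hMV]; simp [huV]
  have hae : a ≠ e := fun h => heV (h ▸ haM)
  have hbe : b ≠ e := fun h => heV (h ▸ hbM)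
  have heA : e ∉ A.V := fun h => heV (by rw [hMV]; simp [h])
  have hcA : c ∉ A.V := fun h => hcV (by rw [hMV]; simp [h])
  have hca : c ≠ a := fun h => hcV (h ▸ haM)
  have hcb : c ≠ b := fun h => hcV (h ▸ hbM)
  have hau : a ≠ u := hua.symm
  have heu : e ≠ u := hue.symm
  refine ⟨{
    V := insert a (insert e A.V)
    atom := A.atom
    charge := fun w => if w = u then A.charge u + 1 else if w = a then 0
      else if w = e then -1 else A.charge w
    mult := fun x y => if (x = u ∧ y = a) ∨ (x = a ∧ y = u) then Mult.nat 1
      else if x = a ∨ y = a ∨ x = e ∨ y = e then Mult.nat 0 else A.mult x y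
    mult_symm := by
      intro x y
      have hsymm := A.mult_symm x y
      split_ifs <;> first | rfl | tauto
    atom_default := by
      intro v hv
      exact A.atom_default v fun h => hv (by simp [h])
    charge_default := by
      intro v hv
      simp only [Finset.mem_insert, not_or] at hv
      obtain ⟨hva, hve, hvA⟩ := hv
      have hvu : v ≠ u := fun h => hvA (h ▸ huV)
      simp only [if_neg hvu, if_neg hva, if_neg hve]
      exact A.charge_default v hvA
    mult_default := by
      intro x y h
      split_ifs with h1 h2
      · exfalso
        rcases h1 with ⟨rfl, rfl⟩ | ⟨rfl, rfl⟩ <;>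
          rcases h with h | h | h <;> simp_all
      · rfl
      · push_neg at h2
        apply A.mult_default
        rcases h with h | h | h
        · exact Or.inl fun hx => h (by simp [hx])
        · exact Or.inr (Or.inl fun hy => h (by simp [hy]))
        · exact Or.inr (Or.inr h)
    alpha_cond := by
      intro w hw hwa
      rcases Finset.mem_insert.mp hw with rfl | hw'
      · -- w = a
        left
        refine ⟨by simp [hau], u, by simp [huV], hchem.2, by simp, ?_⟩
        intro w' _ hwu'
        rw [if_neg (by rintro (⟨h, -⟩ | ⟨-, h⟩); exacts [hau h, hwu' h]),
          if_pos (Or.inl rfl)]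
      · rcases Finset.mem_insert.mp hw' with rfl | hwA
        · -- w = e
          right
          refine ⟨by simp [heu, hae.symm], ?_⟩
          intro w' _
          rw [if_neg (by rintro (⟨h, -⟩ | ⟨h, -⟩); exacts [heu h, hae.symm h]),
            if_pos (Or.inr (Or.inr (Or.inl rfl)))]
        · -- w ∈ A.V
          have hwu : w ≠ u := by
            intro h
            obtain ⟨n, hn⟩ := hchem.2
            rw [h, hn] at hwa
            exact Atom.noConfusion hwa
          have hwa' : w ≠ a := fun h => haV (h ▸ hwA)
          have hwe : w ≠ e := fun h => heA (h ▸ hwA)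
          have hcond1 : ∀ y : ℕ, y ≠ u → ¬((w = u ∧ y = a) ∨ (w = a ∧ y = u)) := by
            rintro y hy (⟨h, -⟩ | ⟨h, -⟩); exacts [hwu h, hwa' h]
          rcases A.alpha_cond w hwA hwa with ⟨hc0, u', hu'V, hu'el, hm1, hrest⟩ |
              ⟨hcm, hiso⟩
          · left
            have hu'a : u' ≠ a := fun h => haV (h ▸ hu'V)
            have hu'e : u' ≠ e := fun h => heA (h ▸ hu'V)
            refine ⟨by simp [hwu, hwa', hwe, hc0], u', by simp [hu'V], hu'el, ?_, ?_⟩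
            · rw [if_neg (by rintro (⟨h, -⟩ | ⟨h, -⟩); exacts [hwu h, hwa' h]),
                if_neg (by push_neg; exact ⟨hwa', hu'a, hwe, hu'e⟩)]
              exact hm1
            · intro w' hw'mem hne
              rcases Finset.mem_insert.mp hw'mem with rfl | hw''
              · rw [if_neg (by rintro (⟨h, -⟩ | ⟨h, -⟩); exacts [hwu h, hwa' h]),
                  if_pos (Or.inr (Or.inl rfl))]
              · rcases Finset.mem_insert.mp hw'' with rfl | hw'A
                · rw [if_neg (by rintro (⟨h, -⟩ | ⟨h, -⟩); exacts [hwu h, hwa' h]),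
                    if_pos (Or.inr (Or.inr (Or.inr rfl)))]
                · have hw'a : w' ≠ a := fun h => haV (h ▸ hw'A)
                  have hw'e : w' ≠ e := fun h => heA (h ▸ hw'A)
                  rw [if_neg (by rintro (⟨h, -⟩ | ⟨h, -⟩); exacts [hwu h, hwa' h]),
                    if_neg (by push_neg; exact ⟨hwa', hw'a, hwe, hw'e⟩)]
                  exact hrest w' hw'A hne
          · right
            refine ⟨by simp [hwu, hwa', hwe, hcm], ?_⟩
            intro w' hw'mem
            rcases Finset.mem_insert.mp hw'mem with rfl | hw''
            · rw [if_neg (by rintro (⟨h, -⟩ | ⟨h, -⟩); exacts [hwu h, hwa' h]),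
                if_pos (Or.inr (Or.inl rfl))]
            · rcases Finset.mem_insert.mp hw'' with rfl | hw'A
              · rw [if_neg (by rintro (⟨h, -⟩ | ⟨h, -⟩); exacts [hwu h, hwa' h]),
                  if_pos (Or.inr (Or.inr (Or.inr rfl)))]
              · have hw'a : w' ≠ a := fun h => haV (h ▸ hw'A)
                have hw'e : w' ≠ e := fun h => heA (h ▸ hw'A)
                rw [if_neg (by rintro (⟨h, -⟩ | ⟨h, -⟩); exacts [hwu h, hwa' h]),
                  if_neg (by push_neg; exact ⟨hwa', hw'a, hwe, hw'e⟩)]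
                exact hiso w' hw'A }, ?_, ?_⟩
  · -- ENegRel u a e A M'
    refine ⟨hua, hue, hae, hchem, hneg, haV, heA, rfl, fun v => rfl, ?_, ?_, ?_, ?_, ?_, ?_⟩
    · simp
    · simp [hau]
    · simp [heu, hae.symm]
    · intro v hvu hva hve
      simp [hvu, hva, hve]
    · simp
    · intro x y hxy
      dsimp only
      rw [if_neg hxy]
      split_ifs with h2
      · symm
        apply A.mult_default
        rcases h2 with rfl | rfl | rfl | rfl
        exacts [Or.inl haV, Or.inr (Or.inl haV), Or.inl heA, Or.inr (Or.inl heA)]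
      · rfl
  · -- ENegRel u c b M' B
    have hmult : ∀ x y, (if (x = u ∧ y = a) ∨ (x = a ∧ y = u) then Mult.nat 1
        else if x = a ∨ y = a ∨ x = e ∨ y = e then Mult.nat 0 else A.mult x y)
        = M.mult x y := by
      intro x y
      by_cases hxy : (x = u ∧ y = a) ∨ (x = a ∧ y = u)
      · rw [if_pos hxy]
        rcases hxy with ⟨rfl, rfl⟩ | ⟨rfl, rfl⟩
        · exact hMm.symm
        · rw [M.mult_symm]; exact hMm.symm
      · rw [if_neg hxy, hMmo x y hxy]
        split_ifs with h2
        · symm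
          apply A.mult_default
          rcases h2 with rfl | rfl | rfl | rfl
          exacts [Or.inl haV, Or.inr (Or.inl haV), Or.inl heA, Or.inr (Or.inl heA)]
        · rfl
    have hch : ∀ v, v ≠ b → v ≠ e →
        (if v = u then A.charge u + 1 else if v = a then 0
          else if v = e then -1 else A.charge v) = M.charge v := by
      intro v hvb hve
      by_cases hvu : v = u
      · subst hvu; rw [if_pos rfl]; exact hMcu.symm
      · by_cases hva : v = a
        · subst hva; rw [if_neg hvu, if_pos rfl]; exact hMca.symm
        · rw [if_neg hvu, if_neg hva, if_neg hve]
          exact (hMco v hvu hva hvb).symm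
    refine ⟨huc, hub, hcb, ⟨by simp [huV], hchem.2⟩, ⟨by simp [huV], ?_⟩,
      ?_, ?_, ?_, fun v => (hBat v).trans (hMat v), ?_, hBcc, ?_, ?_, hBm, ?_⟩
    · -- M'.charge u < 0
      have h : A.charge u + 1 < 0 := by rw [← hMcu]; exact hneg2.2
      simpa using h
    · -- c ∉ M'.V
      simp only [Finset.mem_insert, not_or]
      exact ⟨hca, hce, hcA⟩
    · -- b ∉ M'.V
      simp only [Finset.mem_insert, not_or]
      exact ⟨hab.symm, hbe, hbV⟩
    · -- B.V = insert c (insert b M'.V)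
      show B.V = insert c (insert b (insert a (insert e A.V)))
      rw [hBV, hMV]
      ext v
      simp only [Finset.mem_insert]
      tauto
    · -- B.charge u = M'.charge u + 1
      rw [hBcu, hMcu]
      simp
    · -- B.charge b = -1
      rw [hBco b hub.symm hcb.symm hbe]
      exact hMcb
    · -- other charges
      intro v hvu hvc hvb
      by_cases hve : v = e
      · subst hve
        rw [hBce]
        simp [heu, hae.symm]
      · rw [hBco v hvu hvc hve]
        exact (hch v hvb hve).symm
    · -- other mults
      intro x y hxy
      rw [hBmo x y hxy]
      exact (hmult x y).symm

set_option maxHeartbeats 2000000 in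
lemma crel_swap {u v a b c e : ℕ} {A M B : ChemGraph}
    (h1 : CRel u v a b A M) (h2 : CRel u v c e M B) :
    ∃ M', CRel u v a e A M' ∧ CRel u v c b M' B := by
  obtain ⟨huv, hua, hub, hva, hvb, hab, hchu, hchv, hm0, hmib, haV, hbV, hMV, hMat,
    hMca, hMcb, hMco, ⟨n, hn1, hn2⟩, hMma, hMmb, hMmo⟩ := h1
  obtain ⟨-, huc, hue, hvc, hve, hce, hchu2, hchv2, hm0', hmib', hcV, heV, hBV, hBat,
    hBcc, hBce, hBco, ⟨m, hm1, hm2⟩, hBmc, hBme, hBmo⟩ := h2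
  have huV : u ∈ A.V := hchu.1
  have hvV : v ∈ A.V := hchv.1
  have haM : a ∈ M.V := by rw [hMV]; simp
  have hbM : b ∈ M.V := by rw [hMV]; simp
  have hae : a ≠ e := fun h => heV (h ▸ haM)
  have hbe : b ≠ e := fun h => heV (h ▸ hbM)
  have heA : e ∉ A.V := fun h => heV (by rw [hMV]; simp [h])
  have hcA : c ∉ A.V := fun h => hcV (by rw [hMV]; simp [h])
  have hca : c ≠ a := fun h => hcV (h ▸ haM)
  have hcb : c ≠ b := fun h => hcV (h ▸ hbM)
  have hau : a ≠ u := hua.symm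
  have hav : a ≠ v := hva.symm
  have heu : e ≠ u := hue.symm
  have hev : e ≠ v := hve.symm
  have hvu : v ≠ u := huv.symm
  refine ⟨{
    V := insert a (insert e A.V)
    atom := A.atom
    charge := A.charge
    mult := fun x y => if (x = u ∧ y = v) ∨ (x = v ∧ y = u) then M.mult u v
      else if (x = u ∧ y = a) ∨ (x = a ∧ y = u) ∨ (x = v ∧ y = e) ∨ (x = e ∧ y = v)
        then Mult.nat 1
      else if x = a ∨ y = a ∨ x = e ∨ y = e then Mult.nat 0 else A.mult x y
    mult_symm := by
      intro x y
      rw [A.mult_symm x y]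
      refine if_congr ?_ rfl (if_congr ?_ rfl (if_congr ?_ rfl rfl))
      · constructor <;> rintro (⟨h1, h2⟩ | ⟨h1, h2⟩)
        exacts [Or.inr ⟨h2, h1⟩, Or.inl ⟨h2, h1⟩, Or.inr ⟨h2, h1⟩, Or.inl ⟨h2, h1⟩]
      · constructor <;> rintro (⟨h1, h2⟩ | ⟨h1, h2⟩ | ⟨h1, h2⟩ | ⟨h1, h2⟩)
        exacts [Or.inr (Or.inl ⟨h2, h1⟩), Or.inl ⟨h2, h1⟩,
          Or.inr (Or.inr (Or.inr ⟨h2, h1⟩)), Or.inr (Or.inr (Or.inl ⟨h2, h1⟩)),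
          Or.inr (Or.inl ⟨h2, h1⟩), Or.inl ⟨h2, h1⟩,
          Or.inr (Or.inr (Or.inr ⟨h2, h1⟩)), Or.inr (Or.inr (Or.inl ⟨h2, h1⟩))]
      · constructor <;> rintro (h | h | h | h)
        exacts [Or.inr (Or.inl h), Or.inl h, Or.inr (Or.inr (Or.inr h)),
          Or.inr (Or.inr (Or.inl h)), Or.inr (Or.inl h), Or.inl h,
          Or.inr (Or.inr (Or.inr h)), Or.inr (Or.inr (Or.inl h))]
    atom_default := by
      intro w hw
      exact A.atom_default w fun h => hw (by simp [h])
    charge_default := by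
      intro w hw
      exact A.charge_default w fun h => hw (by simp [h])
    mult_default := by
      intro x y h
      split_ifs with h1 h2
      · exfalso
        rcases h1 with ⟨rfl, rfl⟩ | ⟨rfl, rfl⟩ <;>
          rcases h with h | h | h <;> simp_all
      · exfalso
        rcases h2 with ⟨rfl, rfl⟩ | ⟨rfl, rfl⟩ | ⟨rfl, rfl⟩ | ⟨rfl, rfl⟩ <;>
          rcases h with h | h | h <;> simp_all
      · rfl
      · push_neg at h2
        apply A.mult_default
        rcases h with h | h | h
        · exact Or.inl fun hx => h (by simp [hx])
        · exact Or.inr (Or.inl fun hy => h (by simp [hy]))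
        · exact Or.inr (Or.inr h)
    alpha_cond := by
      intro w hw hwa
      have hcond1 : ∀ x y : ℕ, x ≠ u → x ≠ v → ¬((x = u ∧ y = v) ∨ (x = v ∧ y = u)) := by
        rintro x y hx hx' (⟨h, -⟩ | ⟨h, -⟩); exacts [hx h, hx' h]
      rcases Finset.mem_insert.mp hw with hweq | hw'
      · -- w = a
        have hwu : w ≠ u := by rw [hweq]; exact hau
        have hwv : w ≠ v := by rw [hweq]; exact hav
        have hwe : w ≠ e := by rw [hweq]; exact hae
        have hwA : w ∉ A.V := by rw [hweq]; exact haV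
        left
        refine ⟨A.charge_default w hwA, u, by simp [huV], hchu.2, ?_, ?_⟩
        · rw [if_neg (hcond1 w u hwu hwv), if_pos (Or.inr (Or.inl ⟨hweq, rfl⟩))]
        · intro w' _ hwu'
          rw [if_neg (hcond1 w w' hwu hwv),
            if_neg (by rintro (⟨h, -⟩ | ⟨-, h⟩ | ⟨h, -⟩ | ⟨h, -⟩); exacts [hwu h, hwu' h, hwv h, hwe h]),
            if_pos (Or.inl hweq)]
      · rcases Finset.mem_insert.mp hw' with hweq | hwA
        · -- w = e
          have hwu : w ≠ u := by rw [hweq]; exact heu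
          have hwv : w ≠ v := by rw [hweq]; exact hev
          have hwa2 : w ≠ a := by rw [hweq]; exact fun h => hae h.symm
          have hwA : w ∉ A.V := by rw [hweq]; exact heA
          left
          refine ⟨A.charge_default w hwA, v, by simp [hvV], hchv.2, ?_, ?_⟩
          · rw [if_neg (hcond1 w v hwu hwv), if_pos (Or.inr (Or.inr (Or.inr ⟨hweq, rfl⟩)))]
          · intro w' _ hwv'
            rw [if_neg (hcond1 w w' hwu hwv),
              if_neg (by rintro (⟨h, -⟩ | ⟨h, -⟩ | ⟨h, -⟩ | ⟨-, h⟩); exacts [hwu h, hwa2 h, hwv h, hwv' h]),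
              if_pos (Or.inr (Or.inr (Or.inl hweq)))]
        · -- w ∈ A.V
          have hwu : w ≠ u := by
            intro h
            obtain ⟨k, hk⟩ := hchu.2
            rw [h, hk] at hwa
            exact Atom.noConfusion hwa
          have hwv : w ≠ v := by
            intro h
            obtain ⟨k, hk⟩ := hchv.2
            rw [h, hk] at hwa
            exact Atom.noConfusion hwa
          have hwa' : w ≠ a := fun h => haV (h ▸ hwA)
          have hwe : w ≠ e := fun h => heA (h ▸ hwA)
          have hcond2 : ∀ y : ℕ,
              ¬((w = u ∧ y = a) ∨ (w = a ∧ y = u) ∨ (w = v ∧ y = e) ∨ (w = e ∧ y = v)) := by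
            rintro y (⟨h, -⟩ | ⟨h, -⟩ | ⟨h, -⟩ | ⟨h, -⟩)
            exacts [hwu h, hwa' h, hwv h, hwe h]
          rcases A.alpha_cond w hwA hwa with ⟨hc0, u', hu'V, hu'el, hm1, hrest⟩ |
              ⟨hcm, hiso⟩
          · left
            have hu'a : u' ≠ a := fun h => haV (h ▸ hu'V)
            have hu'e : u' ≠ e := fun h => heA (h ▸ hu'V)
            refine ⟨hc0, u', by simp [hu'V], hu'el, ?_, ?_⟩
            · rw [if_neg (hcond1 w u' hwu hwv), if_neg (hcond2 u'),
                if_neg (by push_neg; exact ⟨hwa', hu'a, hwe, hu'e⟩)]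
              exact hm1
            · intro w' hw'mem hne
              rcases Finset.mem_insert.mp hw'mem with hw'eq | hw''
              · rw [if_neg (hcond1 w w' hwu hwv), if_neg (hcond2 w'),
                  if_pos (Or.inr (Or.inl hw'eq))]
              · rcases Finset.mem_insert.mp hw'' with hw'eq | hw'A
                · rw [if_neg (hcond1 w w' hwu hwv), if_neg (hcond2 w'),
                    if_pos (Or.inr (Or.inr (Or.inr hw'eq)))]
                · have hw'a : w' ≠ a := fun h => haV (h ▸ hw'A)
                  have hw'e : w' ≠ e := fun h => heA (h ▸ hw'A)
                  rw [if_neg (hcond1 w w' hwu hwv), if_neg (hcond2 w'),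
                    if_neg (by push_neg; exact ⟨hwa', hw'a, hwe, hw'e⟩)]
                  exact hrest w' hw'A hne
          · right
            refine ⟨hcm, ?_⟩
            intro w' hw'mem
            rcases Finset.mem_insert.mp hw'mem with hw'eq | hw''
            · rw [if_neg (hcond1 w w' hwu hwv), if_neg (hcond2 w'),
                if_pos (Or.inr (Or.inl hw'eq))]
            · rcases Finset.mem_insert.mp hw'' with hw'eq | hw'A
              · rw [if_neg (hcond1 w w' hwu hwv), if_neg (hcond2 w'),
                  if_pos (Or.inr (Or.inr (Or.inr hw'eq)))]
              · have hw'a : w' ≠ a := fun h => haV (h ▸ hw'A)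
                have hw'e : w' ≠ e := fun h => heA (h ▸ hw'A)
                rw [if_neg (hcond1 w w' hwu hwv), if_neg (hcond2 w'),
                  if_neg (by push_neg; exact ⟨hwa', hw'a, hwe, hw'e⟩)]
                exact hiso w' hw'A }, ?_, ?_⟩
  · -- CRel u v a e A M'
    refine ⟨huv, hua, hue, hva, hve, hae, hchu, hchv, hm0, hmib, haV, heA, rfl,
      fun w => rfl, A.charge_default a haV, A.charge_default e heA,
      fun w _ _ => rfl, ⟨n, hn1, ?_⟩, ?_, ?_, ?_⟩
    · show (if (u = u ∧ v = v) ∨ _ then M.mult u v else _) = Mult.nat n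
      rw [if_pos (Or.inl ⟨rfl, rfl⟩)]
      exact hn2
    · show (if (u = u ∧ a = v) ∨ (u = v ∧ a = u) then _ else _) = Mult.nat 1
      rw [if_neg (by rintro (⟨-, h⟩ | ⟨h, -⟩); exacts [hav h, huv h]),
        if_pos (Or.inl ⟨rfl, rfl⟩)]
    · show (if (v = u ∧ e = v) ∨ (v = v ∧ e = u) then _ else _) = Mult.nat 1
      rw [if_neg (by rintro (⟨h, -⟩ | ⟨-, h⟩); exacts [hvu h, heu h]),
        if_pos (Or.inr (Or.inr (Or.inl ⟨rfl, rfl⟩)))]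
    · intro x y hxy1 hxy2 hxy3
      show (if _ then M.mult u v else _) = A.mult x y
      rw [if_neg hxy1, if_neg (by rintro (h | h | h | h); exacts [hxy2 (Or.inl h), hxy2 (Or.inr h), hxy3 (Or.inl h), hxy3 (Or.inr h)])]
      split_ifs with h3
      · symm
        apply A.mult_default
        rcases h3 with rfl | rfl | rfl | rfl
        exacts [Or.inl haV, Or.inr (Or.inl haV), Or.inl heA, Or.inr (Or.inl heA)]
      · rfl
  · -- CRel u v c b M' B
    have hmult : ∀ x y, ¬((x = v ∧ y = b) ∨ (x = b ∧ y = v)) →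
        ¬((x = v ∧ y = e) ∨ (x = e ∧ y = v)) →
        (if (x = u ∧ y = v) ∨ (x = v ∧ y = u) then M.mult u v
          else if (x = u ∧ y = a) ∨ (x = a ∧ y = u) ∨ (x = v ∧ y = e) ∨ (x = e ∧ y = v)
            then Mult.nat 1
          else if x = a ∨ y = a ∨ x = e ∨ y = e then Mult.nat 0 else A.mult x y)
        = M.mult x y := by
      intro x y hvbp hvep
      by_cases hxy : (x = u ∧ y = v) ∨ (x = v ∧ y = u)
      · rw [if_pos hxy]
        rcases hxy with ⟨h1, h2⟩ | ⟨h1, h2⟩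
        · rw [h1, h2]
        · rw [h1, h2, M.mult_symm v u]
      · rw [if_neg hxy]
        by_cases hxy2 : (x = u ∧ y = a) ∨ (x = a ∧ y = u) ∨ (x = v ∧ y = e) ∨ (x = e ∧ y = v)
        · rw [if_pos hxy2]
          rcases hxy2 with ⟨h1, h2⟩ | ⟨h1, h2⟩ | h | h
          · rw [h1, h2]; exact hMma.symm
          · rw [h1, h2, M.mult_symm a u]; exact hMma.symm
          · exact absurd (Or.inl h) hvep
          · exact absurd (Or.inr h) hvep
        · rw [if_neg hxy2,
            hMmo x y hxy (fun h => hxy2 (h.imp id Or.inl)) hvbp]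
          split_ifs with h3
          · symm
            apply A.mult_default
            rcases h3 with rfl | rfl | rfl | rfl
            exacts [Or.inl haV, Or.inr (Or.inl haV), Or.inl heA, Or.inr (Or.inl heA)]
          · rfl
    have hchg : ∀ w, M.charge w = A.charge w := by
      intro w
      by_cases hwa : w = a
      · rw [hwa, hMca, A.charge_default a haV]
      · by_cases hwb : w = b
        · rw [hwb, hMcb, A.charge_default b hbV]
        · exact hMco w hwa hwb
    refine ⟨huv, huc, hub, hvc, hvb, hcb, ⟨by simp [huV], hchu.2⟩,
      ⟨by simp [hvV], hchv.2⟩, ?_, ?_, ?_, ?_, ?_,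
      fun w => (hBat w).trans (hMat w), hBcc, ?_, ?_, ⟨m, ?_, hm2⟩, hBmc, ?_, ?_⟩
    · show (if (u = u ∧ v = v) ∨ _ then M.mult u v else _) ≠ Mult.nat 0
      rw [if_pos (Or.inl ⟨rfl, rfl⟩)]
      exact hm0'
    · show (if (u = u ∧ v = v) ∨ _ then M.mult u v else _) ≠ Mult.ib
      rw [if_pos (Or.inl ⟨rfl, rfl⟩)]
      exact hmib'
    · -- c ∉ M'.V
      simp only [Finset.mem_insert, not_or]
      exact ⟨hca, hce, hcA⟩
    · -- b ∉ M'.V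
      simp only [Finset.mem_insert, not_or]
      exact ⟨hab.symm, hbe, hbV⟩
    · -- B.V
      show B.V = insert c (insert b (insert a (insert e A.V)))
      rw [hBV, hMV]
      ext w
      simp only [Finset.mem_insert]
      tauto
    · -- B.charge b = 0
      rw [hBco b hcb.symm hbe]
      exact hMcb
    · -- other charges
      intro w hwc hwb
      show B.charge w = A.charge w
      by_cases hwe : w = e
      · rw [hwe, hBce, A.charge_default e heA]
      · rw [hBco w hwc hwe]
        exact hchg w
    · -- M'.mult u v = nat (m+1)
      show (if (u = u ∧ v = v) ∨ _ then M.mult u v else _) = Mult.nat (m + 1)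
      rw [if_pos (Or.inl ⟨rfl, rfl⟩)]
      exact hm1
    · -- B.mult v b = 1
      rw [hBmo v b (by rintro (⟨h, -⟩ | ⟨-, h⟩); exacts [hvu h, hub h.symm])
          (by rintro (⟨h, -⟩ | ⟨h, -⟩); exacts [hvu h, hvc h])
          (by rintro (⟨-, h⟩ | ⟨h, -⟩); exacts [hbe h, hve h])]
      exact hMmb
    · -- other mults
      intro x y hxy1 hxy2 hxy3
      by_cases hvep : (x = v ∧ y = e) ∨ (x = e ∧ y = v)
      · rcases hvep with ⟨h1, h2⟩ | ⟨h1, h2⟩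
        · rw [h1, h2, hBme]
          symm
          show (if (v = u ∧ e = v) ∨ (v = v ∧ e = u) then M.mult u v else _) = Mult.nat 1
          rw [if_neg (by rintro (⟨h, -⟩ | ⟨-, h⟩); exacts [hvu h, heu h]),
            if_pos (Or.inr (Or.inr (Or.inl ⟨rfl, rfl⟩)))]
        · rw [h1, h2, B.mult_symm e v, hBme]
          symm
          show (if (e = u ∧ v = v) ∨ (e = v ∧ v = u) then M.mult u v else _) = Mult.nat 1
          rw [if_neg (by rintro (⟨h, -⟩ | ⟨h, -⟩); exacts [heu h, hev h]),
            if_pos (Or.inr (Or.inr (Or.inr ⟨rfl, rfl⟩)))]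
      · rw [hBmo x y hxy1 hxy2 hvep]
        exact (hmult x y hxy3 hvep).symm

lemma wt_swap (d : DK2) (a b c e : ℕ) (A B : ChemGraph)
    (h : WT [d.gen a b, d.gen c e] A B) : WT [d.gen a e, d.gen c b] A B := by
  obtain ⟨-, hw⟩ := h
  obtain ⟨M, s1, s2⟩ := wtc_two hw
  cases d with
  | Eneg u =>
      cases s1 with
      | Eneg _ _ _ _ _ h1 =>
      cases s2 with
      | Eneg _ _ _ _ _ h2 =>
      obtain ⟨M', k1, k2⟩ := eneg_swap h1 h2
      exact ⟨by simp, .cons (.Eneg _ _ _ _ _ k1) (.cons (.Eneg _ _ _ _ _ k2) (.nil _))⟩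
  | C u v =>
      cases s1 with
      | C _ _ _ _ _ _ h1 =>
      cases s2 with
      | C _ _ _ _ _ _ h2 =>
      obtain ⟨M', k1, k2⟩ := crel_swap h1 h2
      exact ⟨by simp, .cons (.C _ _ _ _ _ _ k1) (.cons (.C _ _ _ _ _ _ k2) (.nil _))⟩

end Disconnection

open Disconnection in
/-- for any disconnection kind `d ∈ {E, C, I}` (with subscripts),
the terms `d^U_{ab};d^U_{cd}` and `d^U_{ad};d^U_{cb}` are well-typed of a given
type `A → B` simultaneously, and the identity
`d^U_{ab};d^U_{cd} ≡ d^U_{ad};d^U_{cb}` is derivable in `Disc`. -/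
theorem disc_subscripts_swap (d : DK2) (a b c e : ℕ) (A B : ChemGraph) :
    (WT [d.gen a b, d.gen c e] A B ↔ WT [d.gen a e, d.gen c b] A B) ∧
    (WT [d.gen a b, d.gen c e] A B →
      DiscEq A B [d.gen a b, d.gen c e] [d.gen a e, d.gen c b]) := by
  constructor
  · exact ⟨wt_swap d a b c e A B, wt_swap d a e c b A B⟩
  · intro h
    exact DiscEq.base h (wt_swap d a b c e A B h) (Or.inl (approx_swap d a b c e))
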